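/- Let (Ω,d) be a bounded minimally nice metric space whose metric completion Ω̄^d is compact, and suppose (Ω,d) is quasihyperbolically visible. Then every quasihyperbolic geodesic ray γ : [0,∞) → (Ω,k_Ω) lands at the metric boundary, i.e. lim_{t→∞} γ(t) exists in the metric d and belongs to ∂_dΩ. -/

import Mathlib

open Set Filter Metric Topology UniformConvergence ENNReal

noncomputable section

variable {Ω : Type*} [MetricSpace Ω]

/-- The metric boundary `∂_dΩ` of a metric space `Ω`: the complement of (the image of) `Ω`
in its metric completion `Ω̄^d`. -/
def metricBoundary (Ω : Type*) [MetricSpace Ω] : Set (UniformSpace.Completion Ω) :=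
  (Set.range ((↑) : Ω → UniformSpace.Completion Ω))ᶜ

/-- `δ_Ω(z)`: the distance from `z ∈ Ω` to the metric boundary `∂_dΩ`. -/
def deltaOmega (z : Ω) : ℝ :=
  Metric.infDist ((z : UniformSpace.Completion Ω)) (metricBoundary Ω)

/-- A rectifiable curve in `Ω`, defined on `[a,b]`, joining `x` to `y`. -/
def IsCurveIn (γ : ℝ → Ω) (a b : ℝ) (x y : Ω) : Prop :=
  a ≤ b ∧ ContinuousOn γ (Set.Icc a b) ∧ γ a = x ∧ γ b = y ∧
    eVariationOn γ (Set.Icc a b) ≠ ⊤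

/-- The `d`-arclength function `t ↦ ℓ_d(γ|_{[a,t]})` of a curve `γ` on `[a,b]` (clamped). -/
def arcLengthFun (γ : ℝ → Ω) (a b : ℝ) : ℝ → ℝ :=
  fun t => (eVariationOn γ (Set.Icc a (max a (min t b)))).toReal

theorem arcLengthFun_monotone {γ : ℝ → Ω} {a b : ℝ} (hab : a ≤ b)
    (hrect : eVariationOn γ (Set.Icc a b) ≠ ⊤) : Monotone (arcLengthFun γ a b) := by
  intro s t hst
  apply ENNReal.toReal_mono
  · exact ne_top_of_le_ne_top hrect
      (eVariationOn.mono γ (Set.Icc_subset_Icc_right (max_le hab (min_le_right _ _))))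
  · exact eVariationOn.mono γ (Set.Icc_subset_Icc_right
      (max_le_max le_rfl (min_le_min hst le_rfl)))

/-- The quasihyperbolic length `ℓ_k(γ) = ∫_γ |dz| / δ_Ω(z)` of a rectifiable curve
`γ : [a,b] → Ω`: the Lebesgue–Stieltjes integral of `1/δ_Ω(γ(t))` with respect to the
arclength function of `γ`.  (Non-rectifiable "curves" get length `⊤`.) -/
def qhLength (γ : ℝ → Ω) (a b : ℝ) : ℝ≥0∞ :=
  if h : a ≤ b ∧ eVariationOn γ (Set.Icc a b) ≠ ⊤ then
    ∫⁻ t in Set.Icc a b, ENNReal.ofReal (1 / deltaOmega (γ t))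
      ∂(arcLengthFun_monotone h.1 h.2).stieltjesFunction.measure
  else ⊤

/-- The quasihyperbolic distance (as an extended real): the infimum of the quasihyperbolic
lengths of rectifiable curves in `Ω` joining `x` to `y`. -/
def qhEDist (x y : Ω) : ℝ≥0∞ :=
  ⨅ (γ : ℝ → Ω) (a : ℝ) (b : ℝ) (_ : IsCurveIn γ a b x y), qhLength γ a b

/-- The quasihyperbolic metric `k_Ω`. -/
def qhDist (x y : Ω) : ℝ :=
  (qhEDist x y).toReal

/-- The inner (length) metric `λ_Ω` associated to `(Ω,d)`, as an extended real. -/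
def innerEDist (x y : Ω) : ℝ≥0∞ :=
  ⨅ (γ : ℝ → Ω) (a : ℝ) (b : ℝ) (_ : IsCurveIn γ a b x y), eVariationOn γ (Set.Icc a b)

/-- `(Ω,d)` is minimally nice: rectifiably connected, locally compact, non-complete, and the
identity map from `(Ω,d)` to `(Ω,λ_Ω)` is continuous. -/
structure MinimallyNice (Ω : Type*) [MetricSpace Ω] : Prop where
  rectifiablyConnected : ∀ x y : Ω, ∃ (γ : ℝ → Ω) (a b : ℝ), IsCurveIn γ a b x y
  locallyCompact : LocallyCompactSpace Ω
  nonComplete : ¬ CompleteSpace Ω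
  idContinuous : ∀ x : Ω, Filter.Tendsto (fun y => innerEDist x y) (nhds x) (nhds 0)

/-- `γ` is a geodesic of the quasihyperbolic metric on the parameter set `s`
(parametrized by `k_Ω`-arclength). -/
def IsQHGeodesicOn (γ : ℝ → Ω) (s : Set ℝ) : Prop :=
  ∀ ⦃u⦄, u ∈ s → ∀ ⦃v⦄, v ∈ s → qhDist (γ u) (γ v) = |u - v|

/-- A quasihyperbolic geodesic segment from `x` to `y`. -/
def IsQHGeodesicSeg (γ : ℝ → Ω) (a b : ℝ) (x y : Ω) : Prop :=
  a ≤ b ∧ γ a = x ∧ γ b = y ∧ IsQHGeodesicOn γ (Set.Icc a b)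

/-- A quasihyperbolic geodesic ray `γ : [0,∞) → (Ω, k_Ω)`. -/
def IsQHGeodesicRay (γ : ℝ → Ω) : Prop :=
  IsQHGeodesicOn γ (Set.Ici 0)

/-- A quasihyperbolic geodesic line `γ : (-∞,∞) → (Ω, k_Ω)`. -/
def IsQHGeodesicLine (γ : ℝ → Ω) : Prop :=
  IsQHGeodesicOn γ Set.univ

/-- `(Ω,d)` is quasihyperbolically visible: for every pair of distinct points `p,q` of the
metric boundary there is a compact set `K ⊆ Ω` such that for all sequences `xₙ → p`, `yₙ → q`
(in the metric `d`), every quasihyperbolic geodesic joining `xₙ` and `yₙ` meets `K`. -/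
def QHVisible (Ω : Type*) [MetricSpace Ω] : Prop :=
  ∀ p q : UniformSpace.Completion Ω, p ∈ metricBoundary Ω → q ∈ metricBoundary Ω → p ≠ q →
    ∃ K : Set Ω, IsCompact K ∧
      ∀ x y : ℕ → Ω,
        Filter.Tendsto (fun n => ((x n : Ω) : UniformSpace.Completion Ω))
          Filter.atTop (nhds p) →
        Filter.Tendsto (fun n => ((y n : Ω) : UniformSpace.Completion Ω))
          Filter.atTop (nhds q) →
        ∀ (n : ℕ) (γ : ℝ → Ω) (a b : ℝ), IsQHGeodesicSeg γ a b (x n) (y n) →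
          ∃ t ∈ Set.Icc a b, γ t ∈ K

/-- `(Ω, k_Ω)` is Gromov hyperbolic: there is `δ ≥ 0` such that every quasihyperbolic
geodesic triangle is `δ`-thin. -/
def QHGromovHyperbolic (Ω : Type*) [MetricSpace Ω] : Prop :=
  ∃ δ : ℝ, 0 ≤ δ ∧
    ∀ (x y z : Ω) (γ₁ γ₂ γ₃ : ℝ → Ω) (a₁ b₁ a₂ b₂ a₃ b₃ : ℝ),
      IsQHGeodesicSeg γ₁ a₁ b₁ x y → IsQHGeodesicSeg γ₂ a₂ b₂ y z →
      IsQHGeodesicSeg γ₃ a₃ b₃ x z →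
      ∀ t ∈ Set.Icc a₁ b₁,
        ∃ u, (u ∈ Set.Icc a₂ b₂ ∧ qhDist (γ₁ t) (γ₂ u) ≤ δ) ∨
             (u ∈ Set.Icc a₃ b₃ ∧ qhDist (γ₁ t) (γ₃ u) ≤ δ)

/-- `(Ω,d)` is quasiconvex: some `A ≥ 1` so that every two points are joined by a curve of
`d`-length at most `A·d(x,y)`. -/
def QuasiconvexSpace (Ω : Type*) [MetricSpace Ω] : Prop :=
  ∃ A : ℝ, 1 ≤ A ∧ ∀ x y : Ω, ∃ (γ : ℝ → Ω) (a b : ℝ), IsCurveIn γ a b x y ∧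
    eVariationOn γ (Set.Icc a b) ≤ ENNReal.ofReal (A * dist x y)

/-- The Gehring–Hayman theorem holds in `(Ω,d)`: quasihyperbolic geodesics are essentially
the shortest curves, up to a multiplicative constant `C ≥ 1`. -/
def GehringHayman (Ω : Type*) [MetricSpace Ω] : Prop :=
  ∃ C : ℝ, 1 ≤ C ∧ ∀ x y : Ω, ∀ (γ : ℝ → Ω) (a b : ℝ), IsQHGeodesicSeg γ a b x y →
    ∀ (σ : ℝ → Ω) (a' b' : ℝ), IsCurveIn σ a' b' x y →
      eVariationOn γ (Set.Icc a b) ≤ ENNReal.ofReal C * eVariationOn σ (Set.Icc a' b')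
section Helpers

variable {Ω : Type*} [MetricSpace Ω]

lemma metricBoundary_nonempty (h : ¬ CompleteSpace Ω) : (metricBoundary Ω).Nonempty := by
  rw [Set.nonempty_iff_ne_empty]
  intro hemp
  apply h
  rw [completeSpace_iff_isComplete_range (UniformSpace.Completion.isUniformInducing_coe Ω)]
  have : Set.range ((↑) : Ω → UniformSpace.Completion Ω) = Set.univ := by
    have := compl_eq_bot.mp (?_ : (Set.range ((↑) : Ω → UniformSpace.Completion Ω))ᶜ = ⊥)
    · exact this
    · exact hemp
  rw [this]
  exact completeSpace_iff_isComplete_univ.mp inferInstance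

lemma deltaOmega_pos [LocallyCompactSpace Ω] (hnc : ¬ CompleteSpace Ω) (z : Ω) :
    0 < deltaOmega z := by
  obtain ⟨K, hKn, hKsub, hK⟩ := local_compact_nhds (x := z) (n := Set.univ) Filter.univ_mem
  obtain ⟨r, hr, hball⟩ := Metric.mem_nhds_iff.mp hKn
  -- closedBall z (r/2) is compact
  have hcb : IsCompact (Metric.closedBall z (r/2)) :=
    hK.of_isClosed_subset Metric.isClosed_closedBall
      ((Metric.closedBall_subset_ball (by linarith)).trans hball)
  -- image is compact, hence closed, in the completion
  have himg : IsCompact (((↑) : Ω → UniformSpace.Completion Ω) '' Metric.closedBall z (r/2)) :=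
    hcb.image (UniformSpace.Completion.continuous_coe Ω)
  -- ball around ↑z of radius r/2 contained in range
  have hsub : Metric.ball ((z : UniformSpace.Completion Ω)) (r/2) ⊆
      Set.range ((↑) : Ω → UniformSpace.Completion Ω) := by
    intro w hw
    have hwcl : w ∈ closure (((↑) : Ω → UniformSpace.Completion Ω) '' Metric.closedBall z (r/2)) := by
      rw [Metric.mem_closure_iff]
      intro ε hε
      have hd : dist w (z : UniformSpace.Completion Ω) < r/2 := Metric.mem_ball.mp hw
      set ε' := min ε (r/2 - dist w (z : UniformSpace.Completion Ω)) with hε'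
      have hε'pos : 0 < ε' := lt_min hε (by linarith)
      obtain ⟨x, hx⟩ := Metric.mem_closure_iff.mp
        (UniformSpace.Completion.denseRange_coe (α := Ω) w) ε' hε'pos
      obtain ⟨x', rfl⟩ := hx.1
      refine ⟨(x' : UniformSpace.Completion Ω), ⟨x', ?_, rfl⟩, lt_of_lt_of_le hx.2 (min_le_left _ _)⟩
      rw [Metric.mem_closedBall]
      have : dist (x' : UniformSpace.Completion Ω) (z : UniformSpace.Completion Ω) ≤
          dist (x' : UniformSpace.Completion Ω) w + dist w (z : UniformSpace.Completion Ω) :=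
        dist_triangle _ _ _
      rw [← UniformSpace.Completion.dist_eq x' z]
      have h2 : dist (x' : UniformSpace.Completion Ω) w < r/2 - dist w (z : UniformSpace.Completion Ω) := by
        rw [dist_comm]
        exact lt_of_lt_of_le hx.2 (min_le_right _ _)
      linarith
    rw [himg.isClosed.closure_eq] at hwcl
    exact (Set.image_subset_range _ _) hwcl
  -- hence infDist ≥ r/2
  have hne := metricBoundary_nonempty hnc
  rw [deltaOmega]
  by_contra hle
  push_neg at hle
  have : Metric.infDist ((z : UniformSpace.Completion Ω)) (metricBoundary Ω) < r/2 :=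
    lt_of_le_of_lt hle (by linarith)
  obtain ⟨y, hy, hdy⟩ := (Metric.infDist_lt_iff hne).mp this
  exact hy (hsub (by rwa [Metric.mem_ball, dist_comm]))

lemma deltaOmega_lipschitz (z w : Ω) : deltaOmega z ≤ deltaOmega w + dist z w := by
  have := Metric.infDist_le_infDist_add_dist
    (x := (z : UniformSpace.Completion Ω)) (y := (w : UniformSpace.Completion Ω))
    (s := metricBoundary Ω)
  rwa [UniformSpace.Completion.dist_eq] at this

end Helpers
section Helpers2

variable {Ω : Type*} [MetricSpace Ω]

lemma arcLengthFun_zero_of_le (γ : ℝ → Ω) {a b t : ℝ} (hta : t ≤ a) :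
    arcLengthFun γ a b t = 0 := by
  have h1 : max a (min t b) = a := max_eq_left ((min_le_left t b).trans hta)
  rw [arcLengthFun, h1, Set.Icc_self,
    eVariationOn.subsingleton γ (Set.subsingleton_singleton)]
  simp

lemma arcLengthFun_of_ge (γ : ℝ → Ω) {a b t : ℝ} (hab : a ≤ b) (hbt : b ≤ t) :
    arcLengthFun γ a b t = (eVariationOn γ (Set.Icc a b)).toReal := by
  rw [arcLengthFun, min_eq_right hbt, max_eq_right hab]

lemma stieltjes_measure_Icc_le {γ : ℝ → Ω} {a b : ℝ} (hab : a ≤ b)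
    (hvar : eVariationOn γ (Set.Icc a b) ≠ ⊤) :
    (arcLengthFun_monotone hab hvar).stieltjesFunction.measure (Set.Icc a b) ≤
      eVariationOn γ (Set.Icc a b) := by
  set f := (arcLengthFun_monotone hab hvar).stieltjesFunction with hf
  rw [StieltjesFunction.measure_Icc]
  have hfb : f b = (eVariationOn γ (Set.Icc a b)).toReal := by
    rw [hf, Monotone.stieltjesFunction_eq]
    apply rightLim_eq_of_tendsto
    apply Tendsto.congr' _ tendsto_const_nhds
    filter_upwards [self_mem_nhdsWithin] with t ht
    exact (arcLengthFun_of_ge γ hab (le_of_lt ht)).symm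
  have h0 : 0 ≤ Function.leftLim (⇑f) a := by
    have hmono := f.mono
    have h1 : f (a - 1) ≤ Function.leftLim (⇑f) a := hmono.le_leftLim (by linarith)
    refine le_trans ?_ h1
    rw [hf, Monotone.stieltjesFunction_eq]
    have : Function.rightLim (arcLengthFun γ a b) (a-1) = 0 := by
      apply rightLim_eq_of_tendsto
      apply Tendsto.congr' _ tendsto_const_nhds
      filter_upwards [Ioo_mem_nhdsGT_of_mem (Set.left_mem_Ico.mpr (by linarith : a - 1 < a))]
        with t ht
      exact (arcLengthFun_zero_of_le γ (le_of_lt ht.2)).symm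
    rw [this]
  calc ENNReal.ofReal (f b - Function.leftLim (⇑f) a) ≤ ENNReal.ofReal (f b) :=
        ENNReal.ofReal_le_ofReal (by linarith)
    _ = eVariationOn γ (Set.Icc a b) := by rw [hfb, ENNReal.ofReal_toReal hvar]

lemma qhLength_le_of_deltaOmega_ge {γ : ℝ → Ω} {a b : ℝ} (hab : a ≤ b)
    (hvar : eVariationOn γ (Set.Icc a b) ≠ ⊤) {c : ℝ} (hc : 0 < c)
    (hδ : ∀ t ∈ Set.Icc a b, c ≤ deltaOmega (γ t)) :
    qhLength γ a b ≤ ENNReal.ofReal (1 / c) * eVariationOn γ (Set.Icc a b) := by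
  rw [qhLength, dif_pos ⟨hab, hvar⟩]
  calc ∫⁻ t in Set.Icc a b, ENNReal.ofReal (1 / deltaOmega (γ t))
        ∂(arcLengthFun_monotone hab hvar).stieltjesFunction.measure
      ≤ ∫⁻ _ in Set.Icc a b, ENNReal.ofReal (1 / c)
        ∂(arcLengthFun_monotone hab hvar).stieltjesFunction.measure := by
        apply MeasureTheory.setLIntegral_mono measurable_const
        intro t ht
        apply ENNReal.ofReal_le_ofReal
        exact one_div_le_one_div_of_le hc (hδ t ht)
    _ = ENNReal.ofReal (1 / c) *
        (arcLengthFun_monotone hab hvar).stieltjesFunction.measure (Set.Icc a b) :=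
        MeasureTheory.setLIntegral_const _ _
    _ ≤ ENNReal.ofReal (1 / c) * eVariationOn γ (Set.Icc a b) := by
        exact mul_le_mul_right (stieltjes_measure_Icc_le hab hvar) _

lemma qhEDist_le_qhLength {γ : ℝ → Ω} {a b : ℝ} {x y : Ω} (h : IsCurveIn γ a b x y) :
    qhEDist x y ≤ qhLength γ a b :=
  iInf_le_of_le γ (iInf_le_of_le a (iInf_le_of_le b (iInf_le _ h)))

end Helpers2
section Helpers3

variable {Ω : Type*} [MetricSpace Ω]

/-- Concatenating two short curves emanating from `z` gives a bound on `qhEDist`. -/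
lemma qhEDist_le_one_of_short_curves {z x y : Ω} {σ₁ σ₂ : ℝ → Ω} {a₁ b₁ a₂ b₂ : ℝ}
    (hδ : 0 < deltaOmega z)
    (h₁ : IsCurveIn σ₁ a₁ b₁ z x)
    (h₂ : IsCurveIn σ₂ a₂ b₂ z y)
    (hv₁ : eVariationOn σ₁ (Set.Icc a₁ b₁) ≤ ENNReal.ofReal (deltaOmega z / 4))
    (hv₂ : eVariationOn σ₂ (Set.Icc a₂ b₂) ≤ ENNReal.ofReal (deltaOmega z / 4)) :
    qhEDist x y ≤ 1 := by
  obtain ⟨hab₁, hc₁, hz₁, hx₁, hf₁⟩ := h₁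
  obtain ⟨hab₂, hc₂, hz₂, hy₂, hf₂⟩ := h₂
  set δz := deltaOmega z with hδz
  obtain ⟨L₁, hL₁def⟩ : ∃ l, l = b₁ - a₁ := ⟨_, rfl⟩
  obtain ⟨L₂, hL₂def⟩ : ∃ l, l = b₂ - a₂ := ⟨_, rfl⟩
  obtain ⟨L, hLdef⟩ : ∃ l, l = L₁ + L₂ := ⟨_, rfl⟩
  have hL₁ : 0 ≤ L₁ := by linarith
  have hL₂ : 0 ≤ L₂ := by linarith
  have hL₁L : L₁ ≤ L := by linarith
  have hL : 0 ≤ L := by linarith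
  set σ : ℝ → Ω := fun t => if t ≤ L₁ then σ₁ (b₁ - t) else σ₂ (t - L₁ + a₂) with hσdef
  -- pointwise identifications
  have hEq1 : Set.EqOn σ (fun t => σ₁ (b₁ - t)) (Set.Icc 0 L₁) := by
    intro t ht
    simp only [hσdef]
    rw [if_pos ht.2]
  have hEq2 : Set.EqOn σ (fun t => σ₂ (t - L₁ + a₂)) (Set.Icc L₁ L) := by
    intro t ht
    simp only [hσdef]
    rcases eq_or_lt_of_le ht.1 with h | h
    · rw [if_pos h.symm.le, ← h]
      rw [(by linarith : b₁ - L₁ = a₁), hz₁, (by ring : L₁ - L₁ + a₂ = a₂), hz₂]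
    · rw [if_neg (not_le.mpr h)]
  -- endpoints
  have hσ0 : σ 0 = x := by
    have h := hEq1 (Set.left_mem_Icc.mpr hL₁)
    simp only [sub_zero] at h
    rw [h, hx₁]
  have hσL : σ L = y := by
    have h := hEq2 (Set.right_mem_Icc.mpr hL₁L)
    simp only at h
    rw [h, (by linarith : L - L₁ + a₂ = b₂), hy₂]
  -- maps-to facts
  have hmap1 : ∀ t ∈ Set.Icc 0 L ∩ Set.Iic L₁, b₁ - t ∈ Set.Icc a₁ b₁ := by
    rintro t ⟨⟨ht0, _⟩, htL⟩
    have htL' : t ≤ L₁ := Set.mem_Iic.mp htL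
    exact ⟨by linarith, by linarith⟩
  have hmap2 : ∀ t ∈ Set.Icc 0 L ∩ Set.Ici L₁, t - L₁ + a₂ ∈ Set.Icc a₂ b₂ := by
    rintro t ⟨⟨_, htL⟩, ht1⟩
    have ht1' : L₁ ≤ t := Set.mem_Ici.mp ht1
    exact ⟨by linarith, by linarith⟩
  -- continuity
  have hcont : ContinuousOn σ (Set.Icc 0 L) := by
    apply ContinuousOn.if
    · intro t ht
      have hfr : t = L₁ := by
        have h2 := ht.2
        have hfr' : frontier {a : ℝ | a ≤ L₁} = {L₁} := frontier_Iic
        rw [hfr'] at h2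
        simpa using h2
      show σ₁ (b₁ - t) = σ₂ (t - L₁ + a₂)
      rw [hfr]
      rw [(by linarith : b₁ - L₁ = a₁), (by ring : L₁ - L₁ + a₂ = a₂), hz₁, hz₂]
    · have hsub : Set.Icc 0 L ∩ closure {a : ℝ | a ≤ L₁} ⊆ Set.Icc 0 L ∩ Set.Iic L₁ := by
        have hcl : closure {a : ℝ | a ≤ L₁} = Set.Iic L₁ := closure_Iic L₁
        rw [hcl]
      exact (hc₁.comp (Continuous.continuousOn (by continuity)) hmap1).mono hsub
    · have hsub : Set.Icc 0 L ∩ closure {a : ℝ | ¬ a ≤ L₁} ⊆ Set.Icc 0 L ∩ Set.Ici L₁ := by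
        have hcl : closure {a : ℝ | ¬ a ≤ L₁} = Set.Ici L₁ := by
          rw [(Set.ext fun a => not_le : {a : ℝ | ¬ a ≤ L₁} = Set.Ioi L₁)]
          exact closure_Ioi L₁
        rw [hcl]
      exact (hc₂.comp (Continuous.continuousOn (by continuity)) hmap2).mono hsub
  -- variation pieces
  have hvar1 : eVariationOn σ (Set.Icc 0 L₁) = eVariationOn σ₁ (Set.Icc a₁ b₁) := by
    rw [eVariationOn.eq_of_eqOn hEq1]
    calc eVariationOn (fun t => σ₁ (b₁ - t)) (Set.Icc 0 L₁)
        = eVariationOn σ₁ ((fun t : ℝ => b₁ - t) '' Set.Icc 0 L₁) :=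
          eVariationOn.comp_eq_of_antitoneOn σ₁ _ (fun u _ v _ huv => by beta_reduce; linarith)
      _ = eVariationOn σ₁ (Set.Icc a₁ b₁) := by
          rw [Set.image_const_sub_Icc, (by linarith : b₁ - L₁ = a₁), sub_zero]
  have hvar2 : eVariationOn σ (Set.Icc L₁ L) = eVariationOn σ₂ (Set.Icc a₂ b₂) := by
    rw [eVariationOn.eq_of_eqOn hEq2]
    have heq : Set.EqOn (fun t => σ₂ (t - L₁ + a₂)) (σ₂ ∘ (fun t : ℝ => t + (a₂ - L₁)))
        (Set.Icc L₁ L) := by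
      intro t _; simp only [Function.comp_apply]; ring_nf
    rw [eVariationOn.eq_of_eqOn heq]
    calc eVariationOn (σ₂ ∘ (fun t : ℝ => t + (a₂ - L₁))) (Set.Icc L₁ L)
        = eVariationOn σ₂ ((fun t : ℝ => t + (a₂ - L₁)) '' Set.Icc L₁ L) :=
          eVariationOn.comp_eq_of_monotoneOn σ₂ _ (fun u _ v _ huv => by beta_reduce; linarith)
      _ = eVariationOn σ₂ (Set.Icc a₂ b₂) := by
          rw [Set.image_add_const_Icc, (by ring : L₁ + (a₂ - L₁) = a₂),
            (by linarith : L + (a₂ - L₁) = b₂)]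
  have hvar : eVariationOn σ (Set.Icc 0 L) =
      eVariationOn σ₁ (Set.Icc a₁ b₁) + eVariationOn σ₂ (Set.Icc a₂ b₂) := by
    rw [← hvar1, ← hvar2]
    have h := eVariationOn.Icc_add_Icc σ (s := Set.univ) (a := 0) (b := L₁) (c := L)
      hL₁ hL₁L (Set.mem_univ L₁)
    simp only [Set.univ_inter] at h
    exact h.symm
  have hvtot : eVariationOn σ (Set.Icc 0 L) ≤ ENNReal.ofReal (δz / 2) := by
    rw [hvar]
    calc eVariationOn σ₁ (Set.Icc a₁ b₁) + eVariationOn σ₂ (Set.Icc a₂ b₂)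
        ≤ ENNReal.ofReal (δz / 4) + ENNReal.ofReal (δz / 4) := add_le_add hv₁ hv₂
      _ = ENNReal.ofReal (δz / 2) := by
          rw [← ENNReal.ofReal_add (by positivity) (by positivity)]; ring_nf
  have hvfin : eVariationOn σ (Set.Icc 0 L) ≠ ⊤ :=
    ne_top_of_le_ne_top ENNReal.ofReal_ne_top hvtot
  have hcurve : IsCurveIn σ 0 L x y := ⟨hL, hcont, hσ0, hσL, hvfin⟩
  -- distance to z along the curve
  have hdist : ∀ t ∈ Set.Icc 0 L, dist (σ t) z ≤ δz / 4 := by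
    intro t ht
    have key : ∃ s₀, (σ t = σ₁ s₀ ∧ s₀ ∈ Set.Icc a₁ b₁) ∨ (σ t = σ₂ s₀ ∧ s₀ ∈ Set.Icc a₂ b₂) := by
      by_cases h : t ≤ L₁
      · exact ⟨b₁ - t, Or.inl ⟨by simp only [hσdef]; rw [if_pos h], hmap1 t ⟨ht, h⟩⟩⟩
      · exact ⟨t - L₁ + a₂, Or.inr ⟨by simp only [hσdef]; rw [if_neg h],
          hmap2 t ⟨ht, le_of_lt (not_le.mp h)⟩⟩⟩
    obtain ⟨s₀, h | h⟩ := key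
    · have h1 := eVariationOn.edist_le σ₁ h.2 (Set.left_mem_Icc.mpr hab₁)
      rw [hz₁] at h1
      have hle : edist (σ₁ s₀) z ≤ ENNReal.ofReal (δz / 4) := h1.trans hv₁
      rw [edist_dist] at hle
      rw [h.1]
      exact (ENNReal.ofReal_le_ofReal_iff (by positivity)).mp hle
    · have h1 := eVariationOn.edist_le σ₂ h.2 (Set.left_mem_Icc.mpr hab₂)
      rw [hz₂] at h1
      have hle : edist (σ₂ s₀) z ≤ ENNReal.ofReal (δz / 4) := h1.trans hv₂
      rw [edist_dist] at hle
      rw [h.1]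
      exact (ENNReal.ofReal_le_ofReal_iff (by positivity)).mp hle
  -- delta lower bound along the curve
  have hδσ : ∀ t ∈ Set.Icc 0 L, δz / 2 ≤ deltaOmega (σ t) := by
    intro t ht
    have h1 := deltaOmega_lipschitz z (σ t)
    have h2 := hdist t ht
    rw [dist_comm] at h2
    simp only [← hδz] at h1
    linarith
  -- conclude
  calc qhEDist x y ≤ qhLength σ 0 L := qhEDist_le_qhLength hcurve
    _ ≤ ENNReal.ofReal (1 / (δz / 2)) * eVariationOn σ (Set.Icc 0 L) :=
        qhLength_le_of_deltaOmega_ge hL hvfin (by positivity) hδσ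
    _ ≤ ENNReal.ofReal (1 / (δz / 2)) * ENNReal.ofReal (δz / 2) :=
        mul_le_mul_right hvtot _
    _ = ENNReal.ofReal (1 / (δz / 2) * (δz / 2)) :=
        (ENNReal.ofReal_mul (by positivity)).symm
    _ = 1 := by
        rw [one_div_mul_cancel (by positivity : δz / 2 ≠ 0)]
        simp

end Helpers3
section Helpers4

variable {Ω : Type*} [MetricSpace Ω]

lemma exists_curve_of_innerEDist_lt {z w : Ω} {c : ℝ≥0∞} (h : innerEDist z w < c) :
    ∃ σ a b, IsCurveIn σ a b z w ∧ eVariationOn σ (Set.Icc a b) ≤ c := by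
  by_contra h'
  push_neg at h'
  have : c ≤ innerEDist z w := by
    rw [innerEDist]
    refine le_iInf fun σ => le_iInf fun a => le_iInf fun b => le_iInf fun hc => ?_
    exact (h' σ a b hc).le
  exact absurd h (not_lt.mpr this)

lemma exists_good_ball (hnice : MinimallyNice Ω) (z : Ω) :
    ∃ ε > 0, ∀ x y : Ω, dist x z < ε → dist y z < ε → qhDist x y ≤ 1 := by
  haveI := hnice.locallyCompact
  have hδ : 0 < deltaOmega z := deltaOmega_pos hnice.nonComplete z
  have hev : ∀ᶠ w in nhds z, innerEDist z w < ENNReal.ofReal (deltaOmega z / 4) := by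
    have := hnice.idContinuous z
    exact this (IsOpen.mem_nhds isOpen_Iio (by simp [ENNReal.ofReal_pos]; positivity) :
      Set.Iio (ENNReal.ofReal (deltaOmega z / 4)) ∈ nhds 0)
  obtain ⟨ε, hε, hball⟩ := Metric.eventually_nhds_iff.mp hev
  refine ⟨ε, hε, fun x y hx hy => ?_⟩
  obtain ⟨σ₁, a₁, b₁, hc₁, hv₁⟩ := exists_curve_of_innerEDist_lt (hball hx)
  obtain ⟨σ₂, a₂, b₂, hc₂, hv₂⟩ := exists_curve_of_innerEDist_lt (hball hy)
  have hle : qhEDist x y ≤ 1 := qhEDist_le_one_of_short_curves hδ hc₁ hc₂ hv₁ hv₂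
  calc qhDist x y ≤ (1 : ℝ≥0∞).toReal := ENNReal.toReal_mono ENNReal.one_ne_top hle
    _ = 1 := by simp

lemma not_mapClusterPt_coe (hnice : MinimallyNice Ω) {γ : ℝ → Ω}
    (hγ : IsQHGeodesicRay γ) (z : Ω) :
    ¬ MapClusterPt ((z : UniformSpace.Completion Ω)) Filter.atTop
      (fun t : ℝ => ((γ t : Ω) : UniformSpace.Completion Ω)) := by
  intro hcl
  obtain ⟨ε, hε, hball⟩ := exists_good_ball hnice z
  have hfreq : ∃ᶠ t in Filter.atTop,
      ((γ t : Ω) : UniformSpace.Completion Ω) ∈ Metric.ball ((z : UniformSpace.Completion Ω)) ε :=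
    (mapClusterPt_iff_frequently.mp hcl) _ (Metric.ball_mem_nhds _ hε)
  obtain ⟨s, hsd, hs0⟩ := (hfreq.and_eventually (Filter.eventually_ge_atTop 0)).exists
  obtain ⟨t, htd, hts⟩ := (hfreq.and_eventually (Filter.eventually_ge_atTop (s + 2))).exists
  have hds : dist (γ s) z < ε := by
    rw [← UniformSpace.Completion.dist_eq]
    exact Metric.mem_ball.mp hsd
  have hdt : dist (γ t) z < ε := by
    rw [← UniformSpace.Completion.dist_eq]
    exact Metric.mem_ball.mp htd
  have h1 := hball (γ s) (γ t) hds hdt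
  have h2 : qhDist (γ s) (γ t) = |s - t| :=
    hγ (Set.mem_Ici.mpr hs0) (Set.mem_Ici.mpr (by linarith))
  rw [h2, abs_sub_comm, abs_of_nonneg (by linarith)] at h1
  linarith

end Helpers4
/-- **Lemma 4.3.**  In a bounded minimally nice, quasihyperbolically visible space with
compact metric completion, every quasihyperbolic geodesic ray lands at a point of the metric
boundary: `lim_{t→∞} γ(t)` exists in the metric `d` and belongs to `∂_dΩ`. -/
theorem qhGeodesicRay_lands
    {Ω : Type*} [MetricSpace Ω]
    (hnice : MinimallyNice Ω)
    (hbdd : Bornology.IsBounded (Set.univ : Set Ω))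
    (hcpt : CompactSpace (UniformSpace.Completion Ω))
    (hvis : QHVisible Ω)
    (γ : ℝ → Ω) (hγ : IsQHGeodesicRay γ) :
    ∃ p ∈ metricBoundary Ω,
      Filter.Tendsto (fun t : ℝ => ((γ t : Ω) : UniformSpace.Completion Ω))
        Filter.atTop (nhds p) := by
  haveI := hnice.locallyCompact
  set f : ℝ → UniformSpace.Completion Ω := fun t => ((γ t : Ω) : UniformSpace.Completion Ω)
    with hfdef
  -- existence of a cluster point
  obtain ⟨p, hp⟩ := exists_clusterPt_of_compactSpace (Filter.map f Filter.atTop)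
  have hp : MapClusterPt p Filter.atTop f := hp
  -- every cluster point lies on the boundary
  have hbd : ∀ x, MapClusterPt x Filter.atTop f → x ∈ metricBoundary Ω := by
    intro x hx
    by_contra hxb
    have hmem : x ∈ Set.range ((↑) : Ω → UniformSpace.Completion Ω) := by
      simpa [metricBoundary] using hxb
    obtain ⟨z, rfl⟩ := hmem
    exact not_mapClusterPt_coe hnice hγ z hx
  -- uniqueness of the cluster point
  have huniq : ∀ x, MapClusterPt x Filter.atTop f → x = p := by
    intro q hq
    by_contra hne'
    obtain ⟨K, hKcomp, hK⟩ := hvis q p (hbd q hq) (hbd p hp) hne'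
    -- frequently-visiting functions
    have hfp : ∀ (δ : ℝ), 0 < δ → ∀ N : ℝ, ∃ s : ℝ, N ≤ s ∧ dist (f s) q < δ := by
      intro δ hδ N
      have hfreq : ∃ᶠ t in Filter.atTop, f t ∈ Metric.ball q δ :=
        (mapClusterPt_iff_frequently.mp hq) _ (Metric.ball_mem_nhds _ hδ)
      obtain ⟨s, h1, h2⟩ := (hfreq.and_eventually (Filter.eventually_ge_atTop N)).exists
      exact ⟨s, h2, Metric.mem_ball.mp h1⟩
    have hfq : ∀ (δ : ℝ), 0 < δ → ∀ N : ℝ, ∃ s : ℝ, N ≤ s ∧ dist (f s) p < δ := by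
      intro δ hδ N
      have hfreq : ∃ᶠ t in Filter.atTop, f t ∈ Metric.ball p δ :=
        (mapClusterPt_iff_frequently.mp hp) _ (Metric.ball_mem_nhds _ hδ)
      obtain ⟨s, h1, h2⟩ := (hfreq.and_eventually (Filter.eventually_ge_atTop N)).exists
      exact ⟨s, h2, Metric.mem_ball.mp h1⟩
    have hchoice : ∀ n : ℕ, ∃ su : ℝ × ℝ, (n : ℝ) ≤ su.1 ∧ su.1 ≤ su.2 ∧
        dist (f su.1) q < 1 / (n + 1) ∧ dist (f su.2) p < 1 / (n + 1) := by
      intro n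
      obtain ⟨s, hs1, hs2⟩ := hfp (1 / (n + 1)) (by positivity) n
      obtain ⟨u, hu1, hu2⟩ := hfq (1 / (n + 1)) (by positivity) s
      exact ⟨(s, u), hs1, hu1, hs2, hu2⟩
    choose su h1 h2 h3 h4 using hchoice
    have hone : Filter.Tendsto (fun n : ℕ => 1 / ((n : ℝ) + 1)) Filter.atTop (nhds 0) :=
      tendsto_one_div_add_atTop_nhds_zero_nat
    have hxq : Filter.Tendsto (fun n : ℕ => f ((su n).1)) Filter.atTop (nhds q) := by
      apply tendsto_iff_dist_tendsto_zero.mpr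
      exact squeeze_zero (fun n => dist_nonneg) (fun n => (h3 n).le) hone
    have hyp : Filter.Tendsto (fun n : ℕ => f ((su n).2)) Filter.atTop (nhds p) := by
      apply tendsto_iff_dist_tendsto_zero.mpr
      exact squeeze_zero (fun n => dist_nonneg) (fun n => (h4 n).le) hone
    have hseg : ∀ n : ℕ, IsQHGeodesicSeg γ ((su n).1) ((su n).2) (γ ((su n).1)) (γ ((su n).2)) := by
      intro n
      refine ⟨h2 n, rfl, rfl, fun a ha b hb => ?_⟩
      have hn : (0 : ℝ) ≤ (n : ℝ) := Nat.cast_nonneg n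
      exact hγ (Set.mem_Ici.mpr (le_trans hn (le_trans (h1 n) ha.1)))
        (Set.mem_Ici.mpr (le_trans hn (le_trans (h1 n) hb.1)))
    have hKmeet := fun n : ℕ => hK (fun n => γ ((su n).1)) (fun n => γ ((su n).2)) hxq hyp n
      γ ((su n).1) ((su n).2) (hseg n)
    choose c hc1 hc2 using hKmeet
    obtain ⟨w, hwK, φ, hφ, hconv⟩ := hKcomp.tendsto_subseq hc2
    have hcw : MapClusterPt ((w : UniformSpace.Completion Ω)) Filter.atTop f := by
      apply MapClusterPt.of_comp (φ := fun m : ℕ => c (φ m))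
      · apply Filter.tendsto_atTop_mono
          (fun m : ℕ => ?_) tendsto_natCast_atTop_atTop
        calc (m : ℝ) ≤ (φ m : ℝ) := Nat.cast_le.mpr (hφ.le_apply)
          _ ≤ (su (φ m)).1 := h1 (φ m)
          _ ≤ c (φ m) := (hc1 (φ m)).1
      · have : Filter.Tendsto (fun m : ℕ => γ (c (φ m))) Filter.atTop (nhds w) := hconv
        exact (((UniformSpace.Completion.continuous_coe Ω).tendsto w).comp this).mapClusterPt
    exact (hbd _ hcw) ⟨w, rfl⟩
  exact ⟨p, hbd p hp, tendsto_nhds_of_unique_mapClusterPt huniq⟩
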